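/- It holds the direct decomposition P_{k-2}(T; 𝕂) = skw∇P_{k-1}(T; ℝ^d) ⊕ (P_{k-2}(T; 𝕂) ∩ ker(x)), where ker(x) = {τ : τ(x)x = 0 for all x}. -/

import Mathlib

open MvPolynomial


variable {d : ℕ}

lemma coeff_pderiv' (i : Fin d) (p : MvPolynomial (Fin d) ℝ) (m : Fin d →₀ ℕ) :
    coeff m (pderiv i p) = ((m i : ℝ) + 1) * coeff (m + Finsupp.single i 1) p := by
  induction p using MvPolynomial.induction_on' with
  | monomial s a =>
    rw [pderiv_monomial, coeff_monomial, coeff_monomial]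
    by_cases h : s = m + Finsupp.single i 1
    · subst h
      rw [add_tsub_cancel_right, if_pos rfl, if_pos rfl]
      simp [Finsupp.add_apply, Finsupp.single_eq_same]
      ring
    · rw [if_neg h]
      by_cases h2 : s - Finsupp.single i 1 = m
      · rw [if_pos h2]
        have hsi : s i = 0 := by
          by_contra hs
          apply h
          rw [← h2, tsub_add_cancel_of_le]
          rwa [Finsupp.single_le_iff, Nat.one_le_iff_ne_zero]
        simp [hsi]
      · rw [if_neg h2, mul_zero]
  | add p q hp hq => simp [coeff_add, hp, hq, mul_add]

lemma coeff_X_mul_pderiv' (i : Fin d) (p : MvPolynomial (Fin d) ℝ) (m : Fin d →₀ ℕ) :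
    coeff m (X i * pderiv i p) = (m i : ℝ) * coeff m p := by
  classical
  rw [coeff_X_mul']
  by_cases h : i ∈ m.support
  · rw [if_pos h, coeff_pderiv']
    have h1 : 1 ≤ m i := Nat.one_le_iff_ne_zero.mpr (Finsupp.mem_support_iff.mp h)
    have h2 : m - Finsupp.single i 1 + Finsupp.single i 1 = m :=
      tsub_add_cancel_of_le (by rwa [Finsupp.single_le_iff])
    rw [h2, Finsupp.tsub_apply, Finsupp.single_eq_same]
    congr 1
    have h3 : (m i - 1) + 1 = m i := Nat.succ_pred_eq_of_pos h1
    rw [← h3]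
    push_cast
    ring
  · rw [if_neg h]
    have h0 : m i = 0 := Finsupp.notMem_support_iff.mp h
    simp [h0]

lemma coeff_euler' (p : MvPolynomial (Fin d) ℝ) (m : Fin d →₀ ℕ) :
    coeff m (∑ i : Fin d, X i * pderiv i p)
      = ((m.sum fun _ e => e : ℕ) : ℝ) * coeff m p := by
  rw [coeff_sum]
  simp only [coeff_X_mul_pderiv']
  rw [← Finset.sum_mul]
  congr 1
  rw [Finsupp.sum_fintype _ _ (fun _ => rfl)]
  push_cast
  rfl

noncomputable def eInv (p : MvPolynomial (Fin d) ℝ) : MvPolynomial (Fin d) ℝ :=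
  ∑ m ∈ p.support, monomial m ((2 / (((m.sum fun _ e => e : ℕ) : ℝ) + 2)) * coeff m p)

lemma coeff_eInv (p : MvPolynomial (Fin d) ℝ) (m : Fin d →₀ ℕ) :
    coeff m (eInv p) = (2 / (((m.sum fun _ e => e : ℕ) : ℝ) + 2)) * coeff m p := by
  classical
  unfold eInv
  rw [coeff_sum]
  simp only [coeff_monomial]
  rw [Finset.sum_ite_eq' p.support m]
  by_cases h : m ∈ p.support
  · rw [if_pos h]
  · rw [if_neg h, notMem_support_iff.mp h, mul_zero]

lemma eInv_neg (p : MvPolynomial (Fin d) ℝ) : eInv (-p) = - eInv p := by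
  ext m
  simp only [coeff_eInv, coeff_neg]
  ring

lemma euler_eInv (p : MvPolynomial (Fin d) ℝ) :
    ∑ i : Fin d, X i * pderiv i (eInv p) = C 2 * p - C 2 * eInv p := by
  ext m
  rw [coeff_euler', coeff_eInv, coeff_sub, coeff_C_mul, coeff_C_mul, coeff_eInv]
  have hs : (0:ℝ) ≤ ((m.sum fun _ e => e : ℕ) : ℝ) := Nat.cast_nonneg _
  revert hs
  generalize ((m.sum fun _ e => e : ℕ) : ℝ) = s
  generalize coeff m p = c
  intro hs
  have h : (s + 2) ≠ 0 := by positivity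
  field_simp
  ring

lemma totalDegree_le_of_coeff {p : MvPolynomial (Fin d) ℝ} {n : ℕ}
    (h : ∀ m : Fin d →₀ ℕ, n < m.sum (fun _ e => e) → coeff m p = 0) :
    p.totalDegree ≤ n := by
  rw [MvPolynomial.totalDegree]
  exact Finset.sup_le fun m hm => le_of_not_gt fun hlt => (mem_support_iff.mp hm) (h m hlt)

lemma eInv_totalDegree (p : MvPolynomial (Fin d) ℝ) :
    (eInv p).totalDegree ≤ p.totalDegree := by
  apply totalDegree_le_of_support_subset
  intro m hm
  rw [mem_support_iff] at hm ⊢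
  intro h0
  exact hm (by rw [coeff_eInv, h0, mul_zero])

lemma sum_add_single (m : Fin d →₀ ℕ) (i : Fin d) :
    ((m + Finsupp.single i 1).sum fun _ e => e) = (m.sum fun _ e => e) + 1 := by
  rw [Finsupp.sum_add_index' (fun _ => rfl) (fun _ _ _ => rfl),
    Finsupp.sum_single_index rfl]

lemma pderiv_totalDegree {p : MvPolynomial (Fin d) ℝ} {n : ℕ} (i : Fin d)
    (h : p.totalDegree ≤ n + 1) : (pderiv i p).totalDegree ≤ n := by
  apply totalDegree_le_of_coeff
  intro m hm
  rw [coeff_pderiv', coeff_eq_zero_of_totalDegree_lt, mul_zero]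
  have h1 := sum_add_single m i
  have h2 : ((m + Finsupp.single i 1).sum fun _ e => e)
      = ∑ x ∈ (m + Finsupp.single i 1).support, (m + Finsupp.single i 1 : Fin d →₀ ℕ) x := rfl
  omega

lemma eq_zero_of_euler_eq_neg_two {p : MvPolynomial (Fin d) ℝ}
    (h : ∑ i : Fin d, X i * pderiv i p = C (-2) * p) : p = 0 := by
  ext m
  have h1 := congrArg (coeff m) h
  rw [coeff_euler', coeff_C_mul] at h1
  rw [coeff_zero]
  have hs : (0:ℝ) ≤ ((m.sum fun _ e => e : ℕ) : ℝ) := Nat.cast_nonneg _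
  nlinarith [h1, hs]

lemma pderiv_comm' (i j : Fin d) (p : MvPolynomial (Fin d) ℝ) :
    pderiv i (pderiv j p) = pderiv j (pderiv i p) := by
  by_cases hij : i = j
  · subst hij; rfl
  · ext m
    rw [coeff_pderiv', coeff_pderiv', coeff_pderiv', coeff_pderiv']
    have e1 : (m + Finsupp.single j 1 : Fin d →₀ ℕ) i = m i := by
      rw [Finsupp.add_apply, Finsupp.single_eq_of_ne' fun h => hij h.symm, add_zero]
    have e2 : (m + Finsupp.single i 1 : Fin d →₀ ℕ) j = m j := by
      rw [Finsupp.add_apply, Finsupp.single_eq_of_ne' fun h => hij h, add_zero]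
    rw [e1, e2, add_right_comm]
    ring

lemma pderiv_sum_mul_X (f : Fin d → MvPolynomial (Fin d) ℝ) (i : Fin d) :
    pderiv i (∑ m : Fin d, f m * X m)
      = (∑ m : Fin d, pderiv i (f m) * X m) + f i := by
  rw [map_sum, Finset.sum_congr rfl fun m _ => pderiv_mul, Finset.sum_add_distrib]
  congr 1
  rw [Finset.sum_eq_single i]
  · rw [pderiv_X_self, mul_one]
  · intro b _ hb
    rw [pderiv_X_of_ne hb, mul_zero]
  · intro h; exact absurd (Finset.mem_univ i) h

lemma sum_antisym_zero (f : Fin d → Fin d → MvPolynomial (Fin d) ℝ)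
    (hf : ∀ i m, f m i = - f i m) :
    ∑ i : Fin d, ∑ m : Fin d, f i m * X m * X i = 0 := by
  have key : (∑ i : Fin d, ∑ m : Fin d, f i m * X m * X i)
      = - ∑ i : Fin d, ∑ m : Fin d, f i m * X m * X i := by
    calc (∑ i : Fin d, ∑ m : Fin d, f i m * X m * X i)
        = ∑ m : Fin d, ∑ i : Fin d, f i m * X m * X i := Finset.sum_comm
      _ = ∑ m : Fin d, ∑ i : Fin d, -(f m i * X i * X m) := by
          refine Finset.sum_congr rfl fun m _ => Finset.sum_congr rfl fun i _ => ?_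
          rw [hf i m]; ring
      _ = - ∑ m : Fin d, ∑ i : Fin d, f m i * X i * X m := by
          simp [Finset.sum_neg_distrib]
  have h2 : (∑ i : Fin d, ∑ m : Fin d, f i m * X m * X i)
      + (∑ i : Fin d, ∑ m : Fin d, f i m * X m * X i) = 0 := by
    nth_rewrite 2 [key]
    ring
  have hC : (C (2:ℝ) : MvPolynomial (Fin d) ℝ) = 2 := map_ofNat _ 2
  calc (∑ i : Fin d, ∑ m : Fin d, f i m * X m * X i)
      = C (1/2:ℝ) * C (2:ℝ) * (∑ i : Fin d, ∑ m : Fin d, f i m * X m * X i) := by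
        rw [← C_mul]; norm_num
    _ = C (1/2:ℝ) * ((∑ i : Fin d, ∑ m : Fin d, f i m * X m * X i)
        + (∑ i : Fin d, ∑ m : Fin d, f i m * X m * X i)) := by rw [hC]; ring
    _ = 0 := by rw [h2, mul_zero]

lemma sum_pderiv_antisym_zero (f : Fin d → Fin d → MvPolynomial (Fin d) ℝ)
    (hf : ∀ i m, f m i = - f i m) (j : Fin d) :
    ∑ i : Fin d, ∑ m : Fin d, pderiv j (f i m) * X m * X i = 0 := by
  have h0 := congrArg (pderiv j) (sum_antisym_zero f hf)
  rw [map_zero] at h0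
  simp only [map_sum] at h0
  have hexp : ∀ i m : Fin d, pderiv j (f i m * X m * X i)
      = pderiv j (f i m) * X m * X i + f i m * pderiv j (X m) * X i
        + f i m * X m * pderiv j (X i) := by
    intro i m
    rw [pderiv_mul, pderiv_mul]
    ring
  simp only [hexp, Finset.sum_add_distrib] at h0
  -- second double sum
  have hB2 : (∑ i : Fin d, ∑ m : Fin d, f i m * pderiv j (X m) * X i)
      = ∑ i : Fin d, f i j * X i := by
    refine Finset.sum_congr rfl fun i _ => ?_
    rw [Finset.sum_eq_single j]
    · rw [pderiv_X_self, mul_one]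
    · intro b _ hb
      rw [pderiv_X_of_ne hb, mul_zero, zero_mul]
    · intro h; exact absurd (Finset.mem_univ j) h
  have hB3 : (∑ i : Fin d, ∑ m : Fin d, f i m * X m * pderiv j (X i))
      = ∑ m : Fin d, f j m * X m := by
    rw [Finset.sum_eq_single j]
    · rw [pderiv_X_self]
      simp
    · intro b _ hb
      rw [pderiv_X_of_ne hb]
      simp
    · intro h; exact absurd (Finset.mem_univ j) h
  rw [hB2, hB3] at h0
  have hcancel : (∑ i : Fin d, f i j * X i) + (∑ m : Fin d, f j m * X m) = 0 := by
    rw [← Finset.sum_add_distrib]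
    refine Finset.sum_eq_zero fun i _ => ?_
    rw [hf j i]
    ring
  calc ∑ i : Fin d, ∑ m : Fin d, pderiv j (f i m) * X m * X i
      = (∑ i : Fin d, ∑ m : Fin d, pderiv j (f i m) * X m * X i)
        + ((∑ i : Fin d, f i j * X i) + (∑ m : Fin d, f j m * X m)) := by
        rw [hcancel, add_zero]
    _ = 0 := by rw [← h0]; ring

noncomputable def vv (τ : Matrix (Fin d) (Fin d) (MvPolynomial (Fin d) ℝ)) (j : Fin d) :
    MvPolynomial (Fin d) ℝ := - ∑ m : Fin d, eInv (τ j m) * X m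

lemma key_identity (τ : Matrix (Fin d) (Fin d) (MvPolynomial (Fin d) ℝ))
    (hskw : ∀ i j, τ j i = - τ i j) (j : Fin d) :
    ∑ i : Fin d, (C (1/2 : ℝ) * (pderiv j (vv τ i) - pderiv i (vv τ j))) * X i
      = ∑ i : Fin d, τ j i * X i := by
  have hT' : ∀ a b : Fin d, eInv (τ b a) = - eInv (τ a b) := fun a b => by
    rw [hskw a b, eInv_neg]
  have hdv : ∀ a b : Fin d, pderiv a (vv τ b)
      = -((∑ m : Fin d, pderiv a (eInv (τ b m)) * X m) + eInv (τ b a)) := by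
    intro a b
    unfold vv
    rw [map_neg, pderiv_sum_mul_X]
  have hsplit : ∑ i : Fin d, (C (1/2 : ℝ) * (pderiv j (vv τ i) - pderiv i (vv τ j))) * X i
      = C (1/2:ℝ) * ((∑ i : Fin d, pderiv j (vv τ i) * X i)
          - (∑ i : Fin d, pderiv i (vv τ j) * X i)) := by
    rw [mul_sub, Finset.mul_sum, Finset.mul_sum, ← Finset.sum_sub_distrib]
    exact Finset.sum_congr rfl fun i _ => by ring
  have hS1 : ∑ i : Fin d, pderiv j (vv τ i) * X i = ∑ i : Fin d, eInv (τ j i) * X i := by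
    have e1 : ∀ i : Fin d, pderiv j (vv τ i) * X i
        = -(∑ m : Fin d, pderiv j (eInv (τ i m)) * X m * X i) - eInv (τ i j) * X i := by
      intro i
      calc pderiv j (vv τ i) * X i
          = -((∑ m : Fin d, pderiv j (eInv (τ i m)) * X m) * X i) - eInv (τ i j) * X i := by
            rw [hdv j i]; ring
        _ = _ := by rw [Finset.sum_mul]
    rw [Finset.sum_congr rfl fun i _ => e1 i, Finset.sum_sub_distrib, Finset.sum_neg_distrib]
    rw [sum_pderiv_antisym_zero (fun a b => eInv (τ a b)) (fun i m => hT' i m) j,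
      neg_zero, zero_sub, ← Finset.sum_neg_distrib]
    refine Finset.sum_congr rfl fun i _ => ?_
    rw [hT' j i]
    ring
  have hS2 : ∑ i : Fin d, pderiv i (vv τ j) * X i
      = - (C (2:ℝ) * ∑ i : Fin d, τ j i * X i)
        + C (2:ℝ) * (∑ i : Fin d, eInv (τ j i) * X i)
        - ∑ i : Fin d, eInv (τ j i) * X i := by
    have e2 : ∀ i : Fin d, pderiv i (vv τ j) * X i
        = -(∑ m : Fin d, pderiv i (eInv (τ j m)) * X m * X i) - eInv (τ j i) * X i := by
      intro i
      calc pderiv i (vv τ j) * X i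
          = -((∑ m : Fin d, pderiv i (eInv (τ j m)) * X m) * X i) - eInv (τ j i) * X i := by
            rw [hdv i j]; ring
        _ = _ := by rw [Finset.sum_mul]
    rw [Finset.sum_congr rfl fun i _ => e2 i, Finset.sum_sub_distrib, Finset.sum_neg_distrib]
    have hU : (∑ i : Fin d, ∑ m : Fin d, pderiv i (eInv (τ j m)) * X m * X i)
        = C (2:ℝ) * (∑ m : Fin d, τ j m * X m)
          - C (2:ℝ) * (∑ m : Fin d, eInv (τ j m) * X m) := by
      rw [Finset.sum_comm]
      have inner : ∀ m : Fin d, (∑ i : Fin d, pderiv i (eInv (τ j m)) * X m * X i)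
          = (C (2:ℝ) * τ j m - C (2:ℝ) * eInv (τ j m)) * X m := by
        intro m
        rw [← euler_eInv (τ j m), Finset.sum_mul]
        exact Finset.sum_congr rfl fun i _ => by ring
      rw [Finset.sum_congr rfl fun m _ => inner m, Finset.mul_sum, Finset.mul_sum,
        ← Finset.sum_sub_distrib]
      exact Finset.sum_congr rfl fun m _ => by ring
    rw [hU]
    ring
  rw [hsplit, hS1, hS2]
  have hC : (C (2:ℝ) : MvPolynomial (Fin d) ℝ) = 2 := map_ofNat _ 2
  have hhalf : (C (1/2:ℝ) : MvPolynomial (Fin d) ℝ) * 2 = 1 := by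
    rw [← hC, ← C_mul]; norm_num
  rw [hC]
  linear_combination (∑ i : Fin d, τ j i * X i) * hhalf

/-- Direct decomposition
`P_{k-2}(T; 𝕂) = skw∇P_{k-1}(T; ℝ^d) ⊕ (P_{k-2}(T; 𝕂) ∩ ker(x))`:
every antisymmetric-matrix-valued polynomial `τ` of degree `≤ k−2` is uniquely
the sum of `skw∇v` for a vector polynomial `v` of degree `≤ k−1` and an
antisymmetric-matrix-valued polynomial `ρ` of degree `≤ k−2` with `ρ(x)x = 0`. -/
theorem skwgrad_oplus_kerx_decomposition (d k : ℕ) (hk : 2 ≤ k)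
    (τ : Matrix (Fin d) (Fin d) (MvPolynomial (Fin d) ℝ))
    (hdeg : ∀ i j, (τ i j).totalDegree ≤ k - 2)
    (hskw : ∀ i j, τ j i = - τ i j) :
    ∃! σρ : Matrix (Fin d) (Fin d) (MvPolynomial (Fin d) ℝ) ×
            Matrix (Fin d) (Fin d) (MvPolynomial (Fin d) ℝ),
      (∃ v : Fin d → MvPolynomial (Fin d) ℝ, (∀ j, (v j).totalDegree ≤ k - 1) ∧
        ∀ i j, σρ.1 i j = C (1/2 : ℝ) * (pderiv i (v j) - pderiv j (v i))) ∧
      ((∀ i j, (σρ.2 i j).totalDegree ≤ k - 2) ∧ (∀ i j, σρ.2 j i = - σρ.2 i j) ∧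
        (∀ j, ∑ i : Fin d, σρ.2 j i * X i = 0)) ∧
      τ = σρ.1 + σρ.2 := by
  classical
  set σ : Matrix (Fin d) (Fin d) (MvPolynomial (Fin d) ℝ) :=
    fun i j => C (1/2 : ℝ) * (pderiv i (vv τ j) - pderiv j (vv τ i)) with hσ
  have hvdeg : ∀ j, (vv τ j).totalDegree ≤ k - 1 := by
    intro j
    rw [vv, totalDegree_neg]
    refine (totalDegree_finset_sum _ _).trans (Finset.sup_le fun m _ => ?_)
    refine (totalDegree_mul _ _).trans ?_
    have h1 := (eInv_totalDegree (τ j m)).trans (hdeg j m)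
    have h2 : (X m : MvPolynomial (Fin d) ℝ).totalDegree = 1 := totalDegree_X m
    omega
  have hσdeg : ∀ i j, (σ i j).totalDegree ≤ k - 2 := by
    intro i j
    refine (totalDegree_mul _ _).trans ?_
    have hC : (C (1/2:ℝ) : MvPolynomial (Fin d) ℝ).totalDegree = 0 := totalDegree_C _
    have h1 : (pderiv i (vv τ j)).totalDegree ≤ k - 2 :=
      pderiv_totalDegree i ((hvdeg j).trans (by omega))
    have h2 : (pderiv j (vv τ i)).totalDegree ≤ k - 2 :=
      pderiv_totalDegree j ((hvdeg i).trans (by omega))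
    have h3 := totalDegree_sub (pderiv i (vv τ j)) (pderiv j (vv τ i))
    omega
  have hσskw : ∀ i j, σ j i = - σ i j := by
    intro i j
    show C (1/2 : ℝ) * (pderiv j (vv τ i) - pderiv i (vv τ j))
      = - (C (1/2 : ℝ) * (pderiv i (vv τ j) - pderiv j (vv τ i)))
    ring
  have hρx : ∀ j, ∑ i : Fin d, (τ - σ) j i * X i = 0 := by
    intro j
    simp only [Matrix.sub_apply, sub_mul]
    rw [Finset.sum_sub_distrib, sub_eq_zero]
    exact (key_identity τ hskw j).symm
  refine ⟨⟨σ, τ - σ⟩, ⟨⟨vv τ, hvdeg, fun i j => rfl⟩,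
    ⟨fun i j => ?_, fun i j => ?_, hρx⟩,
    by funext a b; simp [Matrix.add_apply, Matrix.sub_apply]⟩, ?_⟩
  · simp only [Matrix.sub_apply]
    have := totalDegree_sub (τ i j) (σ i j)
    have h1 := hdeg i j
    have h2 := hσdeg i j
    omega
  · simp only [Matrix.sub_apply, hskw i j, hσskw i j]
    ring
  -- uniqueness
  rintro ⟨σ', ρ'⟩ ⟨⟨v', hv'd, hv'⟩, ⟨hρ'd, hρ'skw, hρ'x⟩, hsum⟩
  dsimp only at hv' hsum hρ'd hρ'skw hρ'x
  have hwd : ∀ i j : Fin d, σ' i j - σ i j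
      = C (1/2:ℝ) * (pderiv i (v' j - vv τ j) - pderiv j (v' i - vv τ i)) := by
    intro i j
    rw [hv' i j]
    show _ - C (1/2 : ℝ) * (pderiv i (vv τ j) - pderiv j (vv τ i)) = _
    simp only [map_sub]
    ring
  have hDskw : ∀ i j, σ' j i - σ j i = -(σ' i j - σ i j) := by
    intro i j
    rw [hwd, hwd]
    ring
  have hentry : ∀ a b, τ a b = σ' a b + ρ' a b := by
    intro a b
    rw [hsum]
    simp [Matrix.add_apply]
  have hDx : ∀ j, ∑ i : Fin d, (σ' j i - σ j i) * X i = 0 := by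
    intro jj
    rw [Finset.sum_congr rfl (fun i (_ : i ∈ Finset.univ) => sub_mul (σ' jj i) (σ jj i) (X i)),
      Finset.sum_sub_distrib]
    have hA : ∑ i : Fin d, σ jj i * X i = ∑ i : Fin d, τ jj i * X i := key_identity τ hskw jj
    have hB : ∑ i : Fin d, σ' jj i * X i = ∑ i : Fin d, τ jj i * X i := by
      have e : ∀ i, σ' jj i = τ jj i - ρ' jj i := fun i => by rw [hentry jj i]; ring
      rw [Finset.sum_congr rfl (fun i (_ : i ∈ Finset.univ) => by rw [e i, sub_mul]),
        Finset.sum_sub_distrib, hρ'x jj, sub_zero]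
    rw [hA, hB, sub_self]
  have hD0 : ∀ i j, σ' i j = σ i j := by
    intro i j
    have hBianchi : ∀ l : Fin d, pderiv l (σ' i j - σ i j)
        = -(pderiv i (σ' j l - σ j l)) - pderiv j (σ' l i - σ l i) := by
      intro l
      rw [hwd i j, hwd j l, hwd l i]
      simp only [pderiv_C_mul, map_sub]
      rw [pderiv_comm' l i (v' j), pderiv_comm' l i (vv τ j),
        pderiv_comm' l j (v' i), pderiv_comm' l j (vv τ i),
        pderiv_comm' j i (v' l), pderiv_comm' j i (vv τ l)]
      ring
    have h1 := congrArg (pderiv i) (hDx j)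
    rw [pderiv_sum_mul_X (fun l => σ' j l - σ j l) i, map_zero] at h1
    have h2 := congrArg (pderiv j) (hDx i)
    rw [pderiv_sum_mul_X (fun l => σ' i l - σ i l) j, map_zero] at h2
    have heuler : ∑ l : Fin d, X l * pderiv l (σ' i j - σ i j)
        = C (-2:ℝ) * (σ' i j - σ i j) := by
      have hstep : ∑ l : Fin d, X l * pderiv l (σ' i j - σ i j)
          = -(∑ l : Fin d, pderiv i (σ' j l - σ j l) * X l)
            + ∑ l : Fin d, pderiv j (σ' i l - σ i l) * X l := by
        rw [← Finset.sum_neg_distrib, ← Finset.sum_add_distrib]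
        refine Finset.sum_congr rfl fun l _ => ?_
        rw [hBianchi l, hDskw i l]
        simp only [map_neg]
        ring
      rw [hstep]
      have e1 : ∑ l : Fin d, pderiv i (σ' j l - σ j l) * X l = -(σ' j i - σ j i) := by
        linear_combination h1
      have e2 : ∑ l : Fin d, pderiv j (σ' i l - σ i l) * X l = -(σ' i j - σ i j) := by
        linear_combination h2
      rw [e1, e2, hDskw i j]
      have hC2 : (C (-2:ℝ) : MvPolynomial (Fin d) ℝ) = -2 := by
        rw [map_neg, map_ofNat]
      rw [hC2]
      ring
    have hz := eq_zero_of_euler_eq_neg_two heuler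
    exact sub_eq_zero.mp hz
  have hσeq : σ' = σ := funext fun i => funext fun j => hD0 i j
  have hρeq : ρ' = τ - σ := by
    rw [hsum, ← hσeq]
    funext a b
    simp only [Matrix.add_apply, Matrix.sub_apply]
    ring
  exact Prod.ext hσeq hρeq
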